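/- The symplectic group Sp₄(F₂) has order 720, and the homomorphism S₆ → Sp₄(F₂) induced from the permutation action on the quotient Z = U⁰/L of F₂⁶ is an isomorphism. -/

import Mathlib

open scoped BigOperators

/-- The trace-zero hyperplane `U⁰ ⊂ U = F₂⁶` for the standard bilinear form. -/
def U0 : Submodule (ZMod 2) (Fin 6 → ZMod 2) where
  carrier := {x | ∑ i, x i = 0}
  add_mem' := by
    intro a b ha hb
    simp only [Set.mem_setOf_eq, Pi.add_apply, Finset.sum_add_distrib] at *
    simp [ha, hb]
  zero_mem' := by simp
  smul_mem' := by
    intro c x hx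
    simp only [Set.mem_setOf_eq, Pi.smul_apply, smul_eq_mul, ← Finset.mul_sum] at *
    simp [hx]

lemma mem_U0 {x : Fin 6 → ZMod 2} : x ∈ U0 ↔ ∑ i, x i = 0 := Iff.rfl

/-- The all-ones vector `(1,1,1,1,1,1)`, an element of `U⁰`. -/
def allOnes : U0 := ⟨fun _ => 1, by rw [mem_U0]; decide⟩

/-- The line `L` spanned by the all-ones vector. -/
def Lsub : Submodule (ZMod 2) U0 := Submodule.span (ZMod 2) {allOnes}

/-- The quotient `Z = U⁰/L`. -/
abbrev Zq := U0 ⧸ Lsub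

lemma perm_mem (g : Equiv.Perm (Fin 6)) {x : Fin 6 → ZMod 2} (hx : x ∈ U0) :
    (fun i => x (g⁻¹ i)) ∈ U0 := by
  rw [mem_U0] at hx ⊢
  rw [Equiv.sum_comp g⁻¹ x]
  exact hx

/-! ### Auxiliary decidability and finiteness instances -/

instance instDecU0 : DecidablePred (· ∈ U0) := fun _ => decidable_of_iff _ mem_U0.symm

instance instFintypeU0 : Fintype U0 := Subtype.fintype _

instance instDecLsub : DecidablePred (· ∈ Lsub) := fun x =>
  decidable_of_iff (∃ c : ZMod 2, c • allOnes = x) (Submodule.mem_span_singleton).symm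

instance instDecEqZq : DecidableEq Zq := fun x y =>
  Quotient.recOnSubsingleton₂ x y fun a b =>
    decidable_of_iff _ (Submodule.Quotient.eq (p := Lsub) (x := a) (y := b)).symm

instance instFintypeZq : Fintype Zq :=
  Fintype.ofSurjective (Submodule.Quotient.mk (p := Lsub)) (Submodule.Quotient.mk_surjective _)

instance instFiniteLEquivZq : Finite (Zq ≃ₗ[ZMod 2] Zq) :=
  Finite.of_injective (fun f => (f : Zq → Zq)) DFunLike.coe_injective

instance sympDec : DecidablePred (· ∈ Matrix.symplecticGroup (Fin 2) (ZMod 2)) := fun A =>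
  decidable_of_iff _ (SymplecticGroup.mem_iff (A := A)).symm

instance instFintypeSymp : Fintype (Matrix.symplecticGroup (Fin 2) (ZMod 2)) := Subtype.fintype _

/-! ### A symplectic basis of `Zq` -/

/-- The vector with `1` at positions `a` and `b` and `0` elsewhere (for `a ≠ b`). -/
def pv (a b : Fin 6) : Fin 6 → ZMod 2 := fun k =>
  (if k = a then 1 else 0) + (if k = b then 1 else 0)

lemma pv_mem : ∀ a b : Fin 6, pv a b ∈ U0 := by decide

/-- Elements of `U0` projecting to the symplectic basis of `Zq`. -/
def pvU : Fin 2 ⊕ Fin 2 → U0 :=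
  Sum.elim ![⟨pv 0 1, pv_mem 0 1⟩, ⟨pv 3 4, pv_mem 3 4⟩]
    ![⟨pv 1 2, pv_mem 1 2⟩, ⟨pv 4 5, pv_mem 4 5⟩]

/-- The symplectic basis vectors of `Zq`. -/
def vq (i : Fin 2 ⊕ Fin 2) : Zq := Submodule.Quotient.mk (pvU i)

lemma vq_li : LinearIndependent (ZMod 2) vq :=
  Fintype.linearIndependent_iff.mpr (by decide)

lemma vq_combo : ∀ z : Zq, ∃ c : Fin 2 ⊕ Fin 2 → ZMod 2, ∑ i, c i • vq i = z := by decide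

/-- The symplectic basis of `Zq`. -/
noncomputable def bZ : Module.Basis (Fin 2 ⊕ Fin 2) (ZMod 2) Zq :=
  Module.Basis.mk vq_li (by
    intro z _
    obtain ⟨c, hc⟩ := vq_combo z
    rw [← hc]
    exact Submodule.sum_mem _ fun i _ =>
      Submodule.smul_mem _ _ (Submodule.subset_span ⟨i, rfl⟩))

lemma bZ_apply (i : Fin 2 ⊕ Fin 2) : bZ i = vq i := Module.Basis.mk_apply _ _ _

/-! ### The order of `Sp₄(F₂)` -/

abbrev ι := Fin 2 ⊕ Fin 2
abbrev V := ι → ZMod 2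

def sw : ι → ι := Sum.elim Sum.inr Sum.inl

def dp (r s : V) : ZMod 2 :=
  r (.inr 0) * s (.inl 0) + r (.inr 1) * s (.inl 1) +
    r (.inl 0) * s (.inr 0) + r (.inl 1) * s (.inr 1)

lemma dp_eq (r s : V) : dp r s = ∑ k, r (sw k) * s k := by
  simp [dp, Fintype.sum_sum_type, Fin.sum_univ_two, sw]
  ring

def ee (i j : ι) : ZMod 2 := if j = sw i then 1 else 0

lemma J_ent : ∀ l k : ι, Matrix.J (Fin 2) (ZMod 2) l k = ee l k := by
  intro l k; rcases l with l | l <;> rcases k with k | k <;> fin_cases l <;> fin_cases k <;> decide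

lemma sw_sw : ∀ k : ι, sw (sw k) = k := by decide

open Matrix in
lemma mem_iff_rows (A : Matrix ι ι (ZMod 2)) :
    A ∈ Matrix.symplecticGroup (Fin 2) (ZMod 2) ↔ ∀ i j, dp (A i) (A j) = ee i j := by
  have hJA : ∀ i k, (A * Matrix.J (Fin 2) (ZMod 2)) i k = A i (sw k) := by
    intro i k
    rw [Matrix.mul_apply]
    have h : ∀ l, A i l * Matrix.J (Fin 2) (ZMod 2) l k = if l = sw k then A i l else 0 := by
      intro l
      rw [J_ent]; unfold ee
      by_cases h : l = sw k
      · rw [if_pos h, if_pos (by rw [h, sw_sw]), mul_one]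
      · rw [if_neg h, if_neg (fun hk : k = sw l => h (by rw [hk, sw_sw])), mul_zero]
    rw [Finset.sum_congr rfl fun l _ => h l, Finset.sum_ite_eq' Finset.univ (sw k) (A i)]
    simp
  have hent : ∀ i j, (A * Matrix.J (Fin 2) (ZMod 2) * Aᵀ) i j = dp (A i) (A j) := by
    intro i j
    rw [Matrix.mul_apply, dp_eq]
    apply Finset.sum_congr rfl
    intro k _
    rw [hJA, Matrix.transpose_apply]
  rw [SymplecticGroup.mem_iff, ← Matrix.ext_iff]
  exact forall_congr' fun i => forall_congr' fun j => by rw [hent, J_ent]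

abbrev C2 (a1 b1 : V) : Prop := dp a1 b1 = 1 ∧ dp b1 a1 = 1 ∧ dp a1 a1 = 0 ∧ dp b1 b1 = 0
abbrev C3 (a1 b1 a2 : V) : Prop :=
  dp a1 a2 = 0 ∧ dp a2 a1 = 0 ∧ dp b1 a2 = 0 ∧ dp a2 b1 = 0 ∧ dp a2 a2 = 0
abbrev C4 (a1 b1 a2 b2 : V) : Prop :=
  dp a2 b2 = 1 ∧ dp a1 b2 = 0 ∧ dp b1 b2 = 0 ∧ dp b2 a2 = 1 ∧ dp b2 a1 = 0 ∧
    dp b2 b1 = 0 ∧ dp b2 b2 = 0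

abbrev Q (t : V × V × V × V) : Prop :=
  C2 t.1 t.2.1 ∧ C3 t.1 t.2.1 t.2.2.1 ∧ C4 t.1 t.2.1 t.2.2.1 t.2.2.2

/-- decode a number into a vector -/
def bit (m : Nat) : ZMod 2 := if m % 2 = 1 then 1 else 0

def dec (n : Fin 16) : V :=
  Sum.elim ![bit n.val, bit (n.val / 2)] ![bit (n.val / 4), bit (n.val / 8)]

lemma dec_bij : Function.Bijective dec := by decide

lemma sum_V (f : V → ℕ) : ∑ r : V, f r = ∑ n : Fin 16, f (dec n) :=
  (Fintype.sum_bijective dec dec_bij _ _ fun _ => rfl).symm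

def cntV : ℕ :=
  ∑ a1 : V, ∑ b1 : V, if C2 a1 b1 then
    (∑ a2 : V, if C3 a1 b1 a2 then
      (∑ b2 : V, if C4 a1 b1 a2 b2 then 1 else 0) else 0) else 0

def cntF : ℕ :=
  ∑ n1 : Fin 16, ∑ n2 : Fin 16, if C2 (dec n1) (dec n2) then
    (∑ n3 : Fin 16, if C3 (dec n1) (dec n2) (dec n3) then
      (∑ n4 : Fin 16, if C4 (dec n1) (dec n2) (dec n3) (dec n4) then 1 else 0) else 0) else 0

lemma cntV_eq : cntV = cntF := by
  unfold cntV cntF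
  simp only [sum_V]

set_option maxRecDepth 1000000 in
set_option maxHeartbeats 4000000 in
lemma cntF_val : cntF = 720 := by decide

/-- rows of a tuple, as a matrix -/
def mkM (t : V × V × V × V) : Matrix ι ι (ZMod 2) :=
  Matrix.of (Sum.elim ![t.1, t.2.2.1] ![t.2.1, t.2.2.2])

lemma rowcond_iff (A : Matrix ι ι (ZMod 2)) :
    (∀ i j, dp (A i) (A j) = ee i j) ↔
      Q (A (.inl 0), A (.inr 0), A (.inl 1), A (.inr 1)) := by
  constructor
  · intro h
    refine ⟨⟨?_, ?_, ?_, ?_⟩, ⟨?_, ?_, ?_, ?_, ?_⟩, ⟨?_, ?_, ?_, ?_, ?_, ?_, ?_⟩⟩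
    · simpa [ee, sw] using h (.inl 0) (.inr 0)
    · simpa [ee, sw] using h (.inr 0) (.inl 0)
    · simpa [ee, sw] using h (.inl 0) (.inl 0)
    · simpa [ee, sw] using h (.inr 0) (.inr 0)
    · simpa [ee, sw] using h (.inl 0) (.inl 1)
    · simpa [ee, sw] using h (.inl 1) (.inl 0)
    · simpa [ee, sw] using h (.inr 0) (.inl 1)
    · simpa [ee, sw] using h (.inl 1) (.inr 0)
    · simpa [ee, sw] using h (.inl 1) (.inl 1)
    · simpa [ee, sw] using h (.inl 1) (.inr 1)
    · simpa [ee, sw] using h (.inl 0) (.inr 1)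
    · simpa [ee, sw] using h (.inr 0) (.inr 1)
    · simpa [ee, sw] using h (.inr 1) (.inl 1)
    · simpa [ee, sw] using h (.inr 1) (.inl 0)
    · simpa [ee, sw] using h (.inr 1) (.inr 0)
    · simpa [ee, sw] using h (.inr 1) (.inr 1)
  · intro h i j
    obtain ⟨⟨h1, h2, h3, h4⟩, ⟨h5, h6, h7, h8, h9⟩, ⟨h10, h11, h12, h13, h14, h15, h16⟩⟩ := h
    rcases i with i | i <;> fin_cases i <;> rcases j with j | j <;> fin_cases j <;>
      simp [ee, sw] <;> assumption

noncomputable def spEquiv :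
    Matrix.symplecticGroup (Fin 2) (ZMod 2) ≃ {t : V × V × V × V // Q t} where
  toFun A := ⟨(A.1 (.inl 0), A.1 (.inr 0), A.1 (.inl 1), A.1 (.inr 1)),
    (rowcond_iff A.1).mp ((mem_iff_rows A.1).mp A.2)⟩
  invFun t := ⟨mkM t.1, by
    rw [mem_iff_rows, rowcond_iff]
    exact t.2⟩
  left_inv A := by
    apply Subtype.ext
    funext i j
    rcases i with i | i <;> fin_cases i <;> rfl
  right_inv t := by
    apply Subtype.ext
    rfl

lemma pull (a1 b1 : V) :
    (∑ a2 : V, ∑ b2 : V, if Q (a1, b1, a2, b2) then 1 else 0) =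
      (if C2 a1 b1 then
        (∑ a2 : V, if C3 a1 b1 a2 then
          (∑ b2 : V, if C4 a1 b1 a2 b2 then 1 else 0) else 0) else 0 : ℕ) := by
  by_cases h2 : C2 a1 b1
  · rw [if_pos h2]
    apply Finset.sum_congr rfl
    intro a2 _
    by_cases h3 : C3 a1 b1 a2
    · rw [if_pos h3]
      apply Finset.sum_congr rfl
      intro b2 _
      by_cases h4 : C4 a1 b1 a2 b2
      · rw [if_pos h4, if_pos ⟨h2, h3, h4⟩]
      · rw [if_neg h4, if_neg (fun hq => h4 hq.2.2)]
    · rw [if_neg h3]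
      apply Finset.sum_eq_zero
      intro b2 _
      rw [if_neg (fun hq => h3 hq.2.1)]
  · rw [if_neg h2]
    apply Finset.sum_eq_zero
    intro a2 _
    apply Finset.sum_eq_zero
    intro b2 _
    rw [if_neg (fun hq => h2 hq.1)]

lemma spcard : Nat.card (Matrix.symplecticGroup (Fin 2) (ZMod 2)) = 720 := by
  rw [Nat.card_congr spEquiv, Nat.card_eq_fintype_card, Fintype.card_subtype,
    Finset.card_filter]
  calc (∑ t : V × V × V × V, if Q t then 1 else 0)
      = ∑ a1 : V, ∑ b1 : V, ∑ a2 : V, ∑ b2 : V, if Q (a1, b1, a2, b2) then 1 else 0 := by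
        rw [Fintype.sum_prod_type]
        apply Finset.sum_congr rfl; intro a1 _
        rw [Fintype.sum_prod_type]
        apply Finset.sum_congr rfl; intro b1 _
        rw [Fintype.sum_prod_type]
    _ = ∑ a1 : V, ∑ b1 : V, (if C2 a1 b1 then
          (∑ a2 : V, if C3 a1 b1 a2 then
            (∑ b2 : V, if C4 a1 b1 a2 b2 then 1 else 0) else 0) else 0 : ℕ) := by
        apply Finset.sum_congr rfl; intro a1 _
        apply Finset.sum_congr rfl; intro b1 _
        exact pull a1 b1
    _ = cntV := rfl
    _ = 720 := by rw [cntV_eq, cntF_val]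

lemma exists_not_mem_of_card_lt {α} [Fintype α] [DecidableEq α] {s : Finset α}
    (h : s.card < Fintype.card α) : ∃ k, k ∉ s := by
  have hpos : 0 < sᶜ.card := by rw [Finset.card_compl]; omega
  obtain ⟨k, hk⟩ := Finset.card_pos.mp hpos
  exact ⟨k, Finset.mem_compl.mp hk⟩

/-- The symplectic group `Sp₄(F₂)` has order `720`, and the homomorphism
`S₆ → Sp₄(F₂)` induced from the permutation action on the quotient `Z = U⁰/L` of
`F₂⁶` is an isomorphism: it is injective and its image is exactly the group of
linear automorphisms of `Z` preserving the induced symplectic form. -/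
theorem stmt_10 :
    Nat.card (Matrix.symplecticGroup (Fin 2) (ZMod 2)) = 720 ∧
    ∀ φ : Equiv.Perm (Fin 6) →* (Zq ≃ₗ[ZMod 2] Zq),
      (∀ (g : Equiv.Perm (Fin 6)) (x : Fin 6 → ZMod 2) (hx : x ∈ U0),
        φ g (Submodule.Quotient.mk ⟨x, hx⟩)
          = Submodule.Quotient.mk ⟨fun i => x (g⁻¹ i), perm_mem g hx⟩) →
      ∀ B : Zq →ₗ[ZMod 2] Zq →ₗ[ZMod 2] ZMod 2,
        (∀ x y : U0, B (Submodule.Quotient.mk x) (Submodule.Quotient.mk y)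
            = ∑ i, (x : Fin 6 → ZMod 2) i * (y : Fin 6 → ZMod 2) i) →
        Function.Injective φ ∧
        Set.range φ = {f : Zq ≃ₗ[ZMod 2] Zq | ∀ z w : Zq, B (f z) (f w) = B z w} := by
  refine ⟨spcard, ?_⟩
  intro φ hφ B hB
  -- Gram matrix of `B` in the basis `bZ` is the standard symplectic matrix `J`.
  have hGram : LinearMap.toMatrix₂ bZ bZ B = Matrix.J (Fin 2) (ZMod 2) := by
    ext i j
    rw [LinearMap.toMatrix₂_apply, bZ_apply, bZ_apply, vq, vq, hB]
    rcases i with i | i <;> rcases j with j | j <;> fin_cases i <;> fin_cases j <;> decide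
  -- `f` preserves `B` iff its matrix is symplectic
  have key : ∀ f : Zq ≃ₗ[ZMod 2] Zq,
      (∀ z w : Zq, B (f z) (f w) = B z w) ↔
        LinearMap.toMatrix bZ bZ (f : Zq →ₗ[ZMod 2] Zq) ∈
          Matrix.symplecticGroup (Fin 2) (ZMod 2) := by
    intro f
    rw [SymplecticGroup.mem_iff']
    have h1 : (∀ z w : Zq, B (f z) (f w) = B z w) ↔
        B.compl₁₂ (f : Zq →ₗ[ZMod 2] Zq) (f : Zq →ₗ[ZMod 2] Zq) = B := by
      constructor
      · intro h
        refine LinearMap.ext fun z => LinearMap.ext fun w => ?_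
        simpa [LinearMap.compl₁₂_apply] using h z w
      · intro h z w
        conv_rhs => rw [← h]
        simp [LinearMap.compl₁₂_apply]
    rw [h1, ← (LinearMap.toMatrix₂ (n := ι) (m := ι) (N₂ := ZMod 2) (σ₁ := RingHom.id (ZMod 2)) (σ₂ := RingHom.id (ZMod 2)) bZ bZ).injective.eq_iff,
      LinearMap.toMatrix₂_compl₁₂ bZ bZ, hGram]
  -- the equivalence between B-preserving linear automorphisms and Sp₄(F₂)
  have hcoe : ∀ (A : Matrix (Fin 2 ⊕ Fin 2) (Fin 2 ⊕ Fin 2) (ZMod 2)) (hA : IsUnit A.det),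
      ((Matrix.toLinearEquiv bZ A hA : Zq ≃ₗ[ZMod 2] Zq) : Zq →ₗ[ZMod 2] Zq)
        = Matrix.toLin bZ bZ A := by
    intro A hA
    ext z
    simp [Matrix.toLinearEquiv_apply]
  let E : {f : Zq ≃ₗ[ZMod 2] Zq // ∀ z w : Zq, B (f z) (f w) = B z w} ≃
      Matrix.symplecticGroup (Fin 2) (ZMod 2) :=
    { toFun := fun f => ⟨LinearMap.toMatrix bZ bZ (f.1 : Zq →ₗ[ZMod 2] Zq), (key f.1).mp f.2⟩
      invFun := fun A =>
        ⟨Matrix.toLinearEquiv bZ A.1 (SymplecticGroup.symplectic_det A.2), by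
          rw [key, hcoe, LinearMap.toMatrix_toLin]
          exact A.2⟩
      left_inv := fun f => Subtype.ext (by
        apply LinearEquiv.toLinearMap_injective
        rw [hcoe, Matrix.toLin_toMatrix])
      right_inv := fun A => Subtype.ext (by
        simp only []
        rw [hcoe, LinearMap.toMatrix_toLin]) }
  -- injectivity
  have hinj : Function.Injective φ := by
    rw [injective_iff_map_eq_one]
    intro g hg
    by_contra hne
    obtain ⟨a, ha⟩ : ∃ a, g a ≠ a := by
      by_contra hfix
      push_neg at hfix
      exact hne (Equiv.ext hfix)
    have core : ∀ b : Fin 6, b ≠ a → g b ≠ a → False := by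
      intro b hab hgb
      have hx : pv a b ∈ U0 := pv_mem a b
      have h1 := hφ g (pv a b) hx
      rw [hg] at h1
      simp only [LinearEquiv.coe_one, id_eq] at h1
      rw [Submodule.Quotient.eq] at h1
      unfold Lsub at h1
      rw [Submodule.mem_span_singleton] at h1
      obtain ⟨c, hc⟩ := h1
      have hval : ∀ k, c * 1 = pv a b k - pv a b (g⁻¹ k) := by
        intro k
        have := congrArg (fun v : U0 => (v : Fin 6 → ZMod 2) k) hc
        simpa [allOnes] using this
      have hka := hval a
      have hga' : g⁻¹ a ≠ a := fun h => ha (by conv_lhs => rw [← h]; simp)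
      have hgb' : g⁻¹ a ≠ b := fun h => hgb (by rw [← h]; simp)
      have hxa : pv a b (g⁻¹ a) = 0 := by simp only [pv, if_neg hga', if_neg hgb', add_zero]
      have hxa' : pv a b a = 1 := by
        have hab' : ¬ (a = b) := fun h => hab h.symm
        simp [pv, hab']
      rw [hxa, hxa'] at hka
      have hc1 : c = 1 := by simpa using hka
      rw [hc1] at hval
      have h4 : ({a, b, g a, g b} : Finset (Fin 6)).card < Fintype.card (Fin 6) := by
        have : ({a, b, g a, g b} : Finset (Fin 6)).card ≤ 4 := by
          refine le_trans (Finset.card_insert_le _ _) (Nat.succ_le_succ ?_)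
          refine le_trans (Finset.card_insert_le _ _) (Nat.succ_le_succ ?_)
          refine le_trans (Finset.card_insert_le _ _) (Nat.succ_le_succ ?_)
          simp
        have h6 : Fintype.card (Fin 6) = 6 := by simp
        omega
      obtain ⟨k, hk⟩ := exists_not_mem_of_card_lt h4
      simp only [Finset.mem_insert, Finset.mem_singleton, not_or] at hk
      obtain ⟨hk1, hk2, hk3, hk4⟩ := hk
      have hv := hval k
      have hpk : pv a b k = 0 := by simp [pv, hk1, hk2]
      have hgk1 : g⁻¹ k ≠ a := fun h => hk3 (by rw [← h]; simp)
      have hgk2 : g⁻¹ k ≠ b := fun h => hk4 (by rw [← h]; simp)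
      have hpk' : pv a b (g⁻¹ k) = 0 := by simp only [pv, if_neg hgk1, if_neg hgk2, add_zero]
      rw [hpk, hpk'] at hv
      revert hv; decide
    by_cases h2 : g (g a) = a
    · have hlt : ({a, g a} : Finset (Fin 6)).card < Fintype.card (Fin 6) := by
        have : ({a, g a} : Finset (Fin 6)).card ≤ 2 := by
          refine le_trans (Finset.card_insert_le _ _) (Nat.succ_le_succ ?_)
          simp
        have h6 : Fintype.card (Fin 6) = 6 := by simp
        omega
      obtain ⟨b, hb⟩ := exists_not_mem_of_card_lt hlt
      simp only [Finset.mem_insert, Finset.mem_singleton, not_or] at hb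
      exact core b hb.1 (fun h => hb.2 (g.injective (h.trans h2.symm)))
    · exact core (g a) ha h2
  refine ⟨hinj, ?_⟩
  have hsub : Set.range ⇑φ ⊆ {f : Zq ≃ₗ[ZMod 2] Zq | ∀ z w : Zq, B (f z) (f w) = B z w} := by
    rintro f ⟨g, rfl⟩
    intro z w
    obtain ⟨x, rfl⟩ := Submodule.Quotient.mk_surjective _ z
    obtain ⟨y, rfl⟩ := Submodule.Quotient.mk_surjective _ w
    rw [hφ g x.1 x.2, hφ g y.1 y.2, hB, hB]
    exact Equiv.sum_comp g⁻¹ (fun i => (x : Fin 6 → ZMod 2) i * (y : Fin 6 → ZMod 2) i)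
  have hc1 : Nat.card (Set.range ⇑φ) = 720 := by
    rw [Nat.card_range_of_injective hinj, Nat.card_eq_fintype_card]
    simp [Fintype.card_perm]
    rfl
  have hc2 : Nat.card {f : Zq ≃ₗ[ZMod 2] Zq | ∀ z w : Zq, B (f z) (f w) = B z w} = 720 := by
    exact (Nat.card_congr ((Equiv.subtypeEquivRight fun f => Iff.rfl).trans E)).trans spcard
  apply Set.eq_of_subset_of_ncard_le hsub
  rw [← Nat.card_coe_set_eq, ← Nat.card_coe_set_eq, hc1, hc2]
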